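/- Let X and Y be topological spaces and let C be a path-connected closed subset of X × Y that is locally direct product. Then C = A × B, where A = { x ∈ X | ∃ y ∈ Y, (x,y) ∈ C } is the projection of C to X and B = { y ∈ Y | ∃ x ∈ X, (x,y) ∈ C } is the projection of C to Y. -/

import Mathlib

/-- A subset `C` of `X × Y` is *locally direct product* if for every point `(a, b)` of
`X × Y` there are an open set `U` of `X`, an open set `V` of `Y`, a subset `I` of `U` and
a subset `J` of `V` such that `(a, b) ∈ U × V` and `C ∩ (U × V) = I × J`. -/
def LocallyDirectProduct {X Y : Type*} [TopologicalSpace X] [TopologicalSpace Y]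
    (C : Set (X × Y)) : Prop :=
  ∀ p : X × Y, ∃ (U : Set X) (V : Set Y) (I : Set X) (J : Set Y),
    IsOpen U ∧ IsOpen V ∧ I ⊆ U ∧ J ⊆ V ∧ p.1 ∈ U ∧ p.2 ∈ V ∧ C ∩ U ×ˢ V = I ×ˢ J

open Set

section Aux

variable {X Y : Type*} [TopologicalSpace X] [TopologicalSpace Y]

lemma LocallyDirectProduct.swap {C : Set (X × Y)} (hloc : LocallyDirectProduct C) :
    LocallyDirectProduct ((fun q : Y × X => (q.2, q.1)) ⁻¹' C) := by
  intro p
  obtain ⟨U, V, I, J, hU, hV, hIU, hJV, h1, h2, hr⟩ := hloc (p.2, p.1)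
  refine ⟨V, U, J, I, hV, hU, hJV, hIU, h2, h1, ?_⟩
  ext ⟨y, x⟩
  have := Set.ext_iff.1 hr (x, y)
  simp only [Set.mem_inter_iff, Set.mem_prod, Set.mem_preimage] at this ⊢
  tauto

/-- Spreading lemma: if membership `(x, h t) ∈ C` holds for all `x` in a compact
preconnected set `P` at one parameter `t₀`, and holds for a fixed `x₀ ∈ P` at all
parameters, then it holds for all `x ∈ P` at all parameters. -/
lemma spread {C : Set (X × Y)} (hcl : IsClosed C) (hloc : LocallyDirectProduct C)
    {P : Set X} (hPc : IsCompact P) (hPconn : IsPreconnected P)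
    {T : Type*} [TopologicalSpace T] [PreconnectedSpace T]
    {h : T → Y} (hh : Continuous h) {x₀ : X} (hx₀ : x₀ ∈ P)
    (H1 : ∀ t, (x₀, h t) ∈ C) (t₀ : T) (H2 : ∀ x ∈ P, (x, h t₀) ∈ C) :
    ∀ t, ∀ x ∈ P, (x, h t) ∈ C := by
  set M := {t : T | ∀ x ∈ P, (x, h t) ∈ C} with hM
  suffices hMuniv : M = Set.univ by
    intro t x hx
    exact (hMuniv ▸ Set.mem_univ t : t ∈ M) x hx
  have hMne : M.Nonempty := ⟨t₀, H2⟩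
  apply IsClopen.eq_univ _ hMne
  constructor
  · -- closed
    have : M = ⋂ x ∈ P, h ⁻¹' {y | (x, y) ∈ C} := by
      ext t; simp [hM]
    rw [this]
    exact isClosed_biInter fun x _ =>
      (hcl.preimage (Continuous.prodMk_right x)).preimage hh
  · -- open
    rw [isOpen_iff_mem_nhds]
    intro s hs
    choose U V I J hU hV hIU hJV hmU hmV hrect using fun x : X => hloc (x, h s)
    have key : ∀ x x' y', x' ∈ U x → y' ∈ V x → ((x', y') ∈ C ↔ x' ∈ I x ∧ y' ∈ J x) := by
      intro x x' y' hx' hy'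
      have := Set.ext_iff.1 (hrect x) (x', y')
      simp only [Set.mem_inter_iff, Set.mem_prod] at this
      tauto
    obtain ⟨tf, htfP, htffin, htfcov⟩ := hPc.elim_finite_subcover_image
      (fun x (_ : x ∈ P) => hU x) (fun x hx => Set.mem_biUnion hx (hmU x))
    have hN : (⋂ x ∈ tf, h ⁻¹' (V x)) ∈ nhds s := by
      refine (htffin.isOpen_biInter fun x _ => (hV x).preimage hh).mem_nhds ?_
      exact Set.mem_biInter fun x _ => hmV x
    refine Filter.mem_of_superset hN ?_
    intro s' hs'
    have hs'V : ∀ x ∈ tf, h s' ∈ V x := by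
      intro x hx
      exact Set.mem_iInter₂.1 hs' x hx
    -- the "good" open set
    set O := ⋃ x ∈ {x ∈ tf | h s' ∈ J x}, U x with hO
    have hPO : ∀ x' ∈ P ∩ O, (x', h s') ∈ C := by
      rintro x' ⟨hx'P, hx'O⟩
      simp only [hO, Set.mem_iUnion, Set.mem_sep_iff, exists_prop] at hx'O
      obtain ⟨x, ⟨hxtf, hxJ⟩, hx'U⟩ := hx'O
      have hx'I : x' ∈ I x := ((key x x' (h s) hx'U (hmV x)).1 (hs x' hx'P)).1
      exact (key x x' (h s') hx'U (hs'V x hxtf)).2 ⟨hx'I, hxJ⟩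
    have hgood : ∀ x' ∈ P, (x', h s') ∈ C → x' ∈ O := by
      intro x' hx'P hx'C
      obtain ⟨x, hxtf, hx'U⟩ : ∃ x ∈ tf, x' ∈ U x := by
        have := htfcov hx'P
        simpa using this
      have hxJ : h s' ∈ J x := ((key x x' (h s') hx'U (hs'V x hxtf)).1 hx'C).2
      exact Set.mem_biUnion ⟨hxtf, hxJ⟩ hx'U
    have hx₀O : x₀ ∈ P ∩ O := ⟨hx₀, hgood x₀ hx₀ (H1 s')⟩
    -- preconnectedness argument
    set F := {x' : X | (x', h s') ∈ C} with hF
    have hFc : IsClosed F := hcl.preimage (continuous_id.prodMk continuous_const)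
    have hOopen : IsOpen O := isOpen_biUnion fun x _ => hU x
    by_contra hnot
    have hne : (P ∩ Fᶜ).Nonempty := by
      rw [Set.nonempty_iff_ne_empty]
      intro hemp
      apply hnot
      intro x hx
      by_contra hxc
      exact Set.eq_empty_iff_forall_notMem.1 hemp x ⟨hx, hxc⟩
    have := hPconn O Fᶜ hOopen hFc.isOpen_compl
      (fun x hx => by
        by_cases hc : (x, h s') ∈ C
        · exact Or.inl (hgood x hx hc)
        · exact Or.inr hc)
      ⟨x₀, hx₀O.1, hx₀O.2⟩ ⟨hne.choose, hne.choose_spec.1, hne.choose_spec.2⟩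
    obtain ⟨z, hzP, hzO, hzF⟩ := this
    exact hzF (hPO z ⟨hzP, hzO⟩)

end Aux

theorem stmt_1 {X Y : Type*} [TopologicalSpace X] [TopologicalSpace Y]
    (C : Set (X × Y)) (hpc : IsPathConnected C) (hcl : IsClosed C)
    (hloc : LocallyDirectProduct C) :
    C = {x : X | ∃ y : Y, (x, y) ∈ C} ×ˢ {y : Y | ∃ x : X, (x, y) ∈ C} := by
  apply Set.Subset.antisymm
  · rintro ⟨x, y⟩ h
    exact ⟨⟨y, h⟩, ⟨x, h⟩⟩
  rintro ⟨x, y⟩ ⟨⟨y₀, h1⟩, ⟨x₀, h2⟩⟩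
  obtain ⟨γ, hγ⟩ := hpc.joinedIn (x, y₀) h1 (x₀, y) h2
  have hext : ∀ u : unitInterval, γ.extend ↑u = γ u := fun u => γ.extend_extends' u
  -- the key set
  set K := {t : unitInterval | ∀ s s' : unitInterval, s ≤ t → s' ≤ t →
      ((γ s).1, (γ s').2) ∈ C} with hK
  have h0 : (0 : unitInterval) ∈ K := by
    intro s s' hs hs'
    have hs0 : s = 0 := le_antisymm hs unitInterval.nonneg'
    have hs'0 : s' = 0 := le_antisymm hs' unitInterval.nonneg'
    rw [hs0, hs'0]
    exact hγ 0
  have hKclosed : IsClosed K := by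
    refine isClosed_of_closure_subset ?_
    intro t ht s s' hs hs'
    set f : unitInterval → X × Y :=
      fun u => ((γ.extend (min ↑s ↑u)).1, (γ.extend (min ↑s' ↑u)).2) with hf
    have hfc : Continuous f := by
      apply Continuous.prodMk
      · exact continuous_fst.comp (γ.continuous_extend.comp
          (continuous_const.min continuous_subtype_val))
      · exact continuous_snd.comp (γ.continuous_extend.comp
          (continuous_const.min continuous_subtype_val))
    have hmaps : Set.MapsTo f K C := by
      intro u hu
      have hm1 : min ↑s ↑u ∈ Set.Icc (0:ℝ) 1 :=
        ⟨le_min s.2.1 u.2.1, le_trans (min_le_left _ _) s.2.2⟩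
      have hm2 : min ↑s' ↑u ∈ Set.Icc (0:ℝ) 1 :=
        ⟨le_min s'.2.1 u.2.1, le_trans (min_le_left _ _) s'.2.2⟩
      have e1 : γ.extend (min ↑s ↑u) = γ ⟨_, hm1⟩ := γ.extend_apply hm1
      have e2 : γ.extend (min ↑s' ↑u) = γ ⟨_, hm2⟩ := γ.extend_apply hm2
      simp only [hf, e1, e2]
      exact hu ⟨_, hm1⟩ ⟨_, hm2⟩ (Subtype.mk_le_mk.2 (min_le_right _ _))
        (Subtype.mk_le_mk.2 (min_le_right _ _))
    have := hmaps.closure hfc ht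
    rw [hcl.closure_eq] at this
    have hft : f t = ((γ s).1, (γ s').2) := by
      simp only [hf]
      rw [min_eq_left (Subtype.coe_le_coe.2 hs), min_eq_left (Subtype.coe_le_coe.2 hs'),
        hext s, hext s']
    rwa [hft] at this
  have hKopen : IsOpen K := by
    rw [isOpen_iff_mem_nhds]
    intro t ht
    obtain ⟨U, V, I, J, hU, hV, hIU, hJV, hγU, hγV, hrect⟩ := hloc (γ t)
    have hWnhds : γ ⁻¹' (U ×ˢ V) ∈ nhds t :=
      ((hU.prod hV).preimage γ.continuous).mem_nhds ⟨hγU, hγV⟩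
    obtain ⟨δ, hδpos, hball⟩ := Metric.mem_nhds_iff.1 hWnhds
    refine Filter.mem_of_superset (Metric.ball_mem_nhds t hδpos) ?_
    intro t' ht'
    have hd : dist (t':ℝ) (t:ℝ) < δ := by
      have := ht'
      rwa [Metric.mem_ball, Subtype.dist_eq] at this
    have hIJ : ∀ u : unitInterval, t ≤ u → u ≤ t' → γ u ∈ I ×ˢ J := by
      intro u hu1 hu2
      have hu : u ∈ Metric.ball t δ := by
        rw [Metric.mem_ball, Subtype.dist_eq, Real.dist_eq]
        rw [Real.dist_eq] at hd
        have c1 : (t:ℝ) ≤ u := Subtype.coe_le_coe.2 hu1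
        have c2 : (u:ℝ) ≤ t' := Subtype.coe_le_coe.2 hu2
        calc |(u:ℝ) - t| = (u:ℝ) - t := abs_of_nonneg (by linarith)
          _ ≤ (t':ℝ) - t := by linarith
          _ ≤ |(t':ℝ) - t| := le_abs_self _
          _ < δ := hd
      exact (Set.ext_iff.1 hrect (γ u)).1 ⟨hγ u, hball hu⟩
    have hγtIJ : γ t ∈ I ×ˢ J := (Set.ext_iff.1 hrect (γ t)).1 ⟨hγ t, hγU, hγV⟩
    intro s s' hss hss'
    rcases le_or_gt s t with hst | hst <;> rcases le_or_gt s' t with hs't | hs't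
    · exact ht s s' hst hs't
    · -- s ≤ t < s' ≤ t' : move second coordinate, P = first coords of γ on [0,t]
      have htt' : (t:ℝ) ≤ (t':ℝ) :=
        le_trans (le_of_lt (Subtype.coe_lt_coe.2 hs't)) (Subtype.coe_le_coe.2 hss')
      set P : Set X := (fun r : ℝ => (γ.extend r).1) '' Set.Icc 0 ↑t with hP
      have hcP : Continuous fun r : ℝ => (γ.extend r).1 :=
        continuous_fst.comp γ.continuous_extend
      have hPcomp : IsCompact P := isCompact_Icc.image hcP
      have hPconn : IsPreconnected P := isPreconnected_Icc.image _ hcP.continuousOn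
      have hPmem : ∀ u : unitInterval, u ≤ t → (γ u).1 ∈ P := by
        intro u hu
        exact ⟨↑u, ⟨u.2.1, Subtype.coe_le_coe.2 hu⟩, by simp [hext u]⟩
      have hPmem' : ∀ x' ∈ P, ∃ u : unitInterval, u ≤ t ∧ x' = (γ u).1 := by
        rintro x' ⟨r, ⟨hr0, hrt⟩, rfl⟩
        have hm : r ∈ Set.Icc (0:ℝ) 1 := ⟨hr0, le_trans hrt t.2.2⟩
        exact ⟨⟨r, hm⟩, Subtype.mk_le_mk.2 hrt, by simp [γ.extend_apply hm]⟩
      set h : ℝ → Y := fun r => (γ.extend (min ↑t' (max ↑t r))).2 with hh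
      have hclamp : ∀ r : ℝ, ∃ u : unitInterval, t ≤ u ∧ u ≤ t' ∧ h r = (γ u).2 := by
        intro r
        have hm : min ↑t' (max ↑t r) ∈ Set.Icc (0:ℝ) 1 := by
          constructor
          · exact le_min t'.2.1 (le_trans t.2.1 (le_max_left _ _))
          · exact le_trans (min_le_left _ _) t'.2.2
        refine ⟨⟨_, hm⟩, ?_, ?_, ?_⟩
        · exact Subtype.mk_le_mk.2 (le_min htt' (le_max_left _ _))
        · exact Subtype.mk_le_mk.2 (min_le_left _ _)
        · simp only [hh]
          rw [γ.extend_apply hm]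
      have hhc : Continuous h :=
        continuous_snd.comp (γ.continuous_extend.comp
          (continuous_const.min (continuous_const.max continuous_id)))
      have hH1 : ∀ r : ℝ, ((γ t).1, h r) ∈ C := by
        intro r
        obtain ⟨u, htu, hut', hr⟩ := hclamp r
        rw [hr]
        exact ((Set.ext_iff.1 hrect ((γ t).1, (γ u).2)).2
          ⟨hγtIJ.1, (hIJ u htu hut').2⟩).1
      have hht : h ↑t = (γ t).2 := by
        simp only [hh]
        rw [max_self, min_eq_right htt', hext t]
      have hH2 : ∀ x' ∈ P, (x', h ↑t) ∈ C := by
        intro x' hx'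
        obtain ⟨u, hu, rfl⟩ := hPmem' x' hx'
        rw [hht]
        exact ht u t hu le_rfl
      have hres := spread hcl hloc hPcomp hPconn hhc (hPmem t le_rfl) hH1 ↑t hH2
        ↑s' ((γ s).1) (hPmem s hst)
      have hs'eq : h ↑s' = (γ s').2 := by
        simp only [hh]
        rw [max_eq_right (le_of_lt (Subtype.coe_lt_coe.2 hs't)),
          min_eq_right (Subtype.coe_le_coe.2 hss'), hext s']
      rwa [hs'eq] at hres
    · -- s' ≤ t < s ≤ t' : symmetric, use the swapped set
      have htt' : (t:ℝ) ≤ (t':ℝ) :=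
        le_trans (le_of_lt (Subtype.coe_lt_coe.2 hst)) (Subtype.coe_le_coe.2 hss)
      set Cs : Set (Y × X) := (fun q : Y × X => (q.2, q.1)) ⁻¹' C with hCs
      have hclS : IsClosed Cs :=
        hcl.preimage (continuous_snd.prodMk continuous_fst)
      have hlocS := hloc.swap
      set P : Set Y := (fun r : ℝ => (γ.extend r).2) '' Set.Icc 0 ↑t with hP
      have hcP : Continuous fun r : ℝ => (γ.extend r).2 :=
        continuous_snd.comp γ.continuous_extend
      have hPcomp : IsCompact P := isCompact_Icc.image hcP
      have hPconn : IsPreconnected P := isPreconnected_Icc.image _ hcP.continuousOn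
      have hPmem : ∀ u : unitInterval, u ≤ t → (γ u).2 ∈ P := by
        intro u hu
        exact ⟨↑u, ⟨u.2.1, Subtype.coe_le_coe.2 hu⟩, by simp [hext u]⟩
      have hPmem' : ∀ y' ∈ P, ∃ u : unitInterval, u ≤ t ∧ y' = (γ u).2 := by
        rintro y' ⟨r, ⟨hr0, hrt⟩, rfl⟩
        have hm : r ∈ Set.Icc (0:ℝ) 1 := ⟨hr0, le_trans hrt t.2.2⟩
        exact ⟨⟨r, hm⟩, Subtype.mk_le_mk.2 hrt, by simp [γ.extend_apply hm]⟩
      set h : ℝ → X := fun r => (γ.extend (min ↑t' (max ↑t r))).1 with hh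
      have hclamp : ∀ r : ℝ, ∃ u : unitInterval, t ≤ u ∧ u ≤ t' ∧ h r = (γ u).1 := by
        intro r
        have hm : min ↑t' (max ↑t r) ∈ Set.Icc (0:ℝ) 1 := by
          constructor
          · exact le_min t'.2.1 (le_trans t.2.1 (le_max_left _ _))
          · exact le_trans (min_le_left _ _) t'.2.2
        refine ⟨⟨_, hm⟩, ?_, ?_, ?_⟩
        · exact Subtype.mk_le_mk.2 (le_min htt' (le_max_left _ _))
        · exact Subtype.mk_le_mk.2 (min_le_left _ _)
        · simp only [hh]
          rw [γ.extend_apply hm]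
      have hhc : Continuous h :=
        continuous_fst.comp (γ.continuous_extend.comp
          (continuous_const.min (continuous_const.max continuous_id)))
      have hH1 : ∀ r : ℝ, ((γ t).2, h r) ∈ Cs := by
        intro r
        obtain ⟨u, htu, hut', hr⟩ := hclamp r
        rw [hr]
        show ((γ u).1, (γ t).2) ∈ C
        exact ((Set.ext_iff.1 hrect ((γ u).1, (γ t).2)).2
          ⟨(hIJ u htu hut').1, hγtIJ.2⟩).1
      have hht : h ↑t = (γ t).1 := by
        simp only [hh]
        rw [max_self, min_eq_right htt', hext t]
      have hH2 : ∀ y' ∈ P, (y', h ↑t) ∈ Cs := by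
        intro y' hy'
        obtain ⟨u, hu, rfl⟩ := hPmem' y' hy'
        rw [hht]
        show ((γ t).1, (γ u).2) ∈ C
        exact ht t u le_rfl hu
      have hres := spread hclS hlocS hPcomp hPconn hhc (hPmem t le_rfl) hH1 ↑t hH2
        ↑s ((γ s').2) (hPmem s' hs't)
      have hseq : h ↑s = (γ s).1 := by
        simp only [hh]
        rw [max_eq_right (le_of_lt (Subtype.coe_lt_coe.2 hst)),
          min_eq_right (Subtype.coe_le_coe.2 hss), hext s]
      rw [hseq] at hres
      exact hres
    · -- both > t
      have hsIJ := hIJ s (le_of_lt hst) hss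
      have hs'IJ := hIJ s' (le_of_lt hs't) hss'
      exact ((Set.ext_iff.1 hrect ((γ s).1, (γ s').2)).2 ⟨hsIJ.1, hs'IJ.2⟩).1
  have hKuniv : K = Set.univ := IsClopen.eq_univ ⟨hKclosed, hKopen⟩ ⟨0, h0⟩
  have hone : (1 : unitInterval) ∈ K := hKuniv ▸ Set.mem_univ _
  have hfin := hone 0 1 unitInterval.nonneg' le_rfl
  rw [show (γ 0) = (x, y₀) from γ.source, show (γ 1) = (x₀, y) from γ.target] at hfin
  exact hfin
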